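/- Let K be a compact Hausdorff space and L'' ⊂ K a compact subset. Let U₀ ⊂ ℂⁿ be open and let the sheaf O on U₀ × K assign to open sets the continuous functions holomorphic in the first variable. Fix an open polydisk V₀ with compact closure in U₀ and an open set N with compact closure in L''. Then for every function f continuous on a neighborhood of closure(V₀) × closure(N) in U₀ × K and holomorphic in the first variable, and every ε > 0, there exists F continuous on U₀ × K, holomorphic in the first variable, with sup over closure(V₀) × closure(N) of |f − F| < ε. -/

import Mathlib

open Complex Metric Set

/-- The closed polydisk. -/
def pbar {n : ℕ} (c : Fin n → ℂ) (r : Fin n → ℝ) : Set (Fin n → ℂ) :=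
  {z | ∀ i, ‖z i - c i‖ ≤ r i}

lemma pbar_eq {n : ℕ} (c : Fin n → ℂ) (r : Fin n → ℝ) :
    pbar c r = Set.pi Set.univ (fun i => closedBall (c i) (r i)) := by
  ext z
  simp [pbar, Set.mem_pi, Complex.dist_eq]

lemma isCompact_pbar {n : ℕ} (c : Fin n → ℂ) (r : Fin n → ℝ) : IsCompact (pbar c r) := by
  rw [pbar_eq]
  exact isCompact_univ_pi fun i => isCompact_closedBall _ _

lemma isClosed_pbar {n : ℕ} (c : Fin n → ℂ) (r : Fin n → ℝ) : IsClosed (pbar c r) :=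
  (isCompact_pbar c r).isClosed

def polydisk' {n : ℕ} (c : Fin n → ℂ) (r : Fin n → ℝ) : Set (Fin n → ℂ) :=
  {z | ∀ i, ‖z i - c i‖ < r i}

lemma closure_polydisk' {n : ℕ} (c : Fin n → ℂ) (r : Fin n → ℝ) (hr : ∀ i, 0 < r i) :
    closure (polydisk' c r) = pbar c r := by
  apply Subset.antisymm
  · exact closure_minimal (fun z hz i => (hz i).le) (isClosed_pbar c r)
  · intro z hz
    rw [Metric.mem_closure_iff]
    intro ε hε
    set M : ℝ := 1 + ∑ i, r i with hM
    have hsum : (0:ℝ) ≤ ∑ i, r i := Finset.sum_nonneg fun i _ => (hr i).le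
    have hM0 : 1 ≤ M := by rw [hM]; linarith
    have hMpos : 0 < M := by linarith
    have hrM : ∀ i, r i ≤ M := by
      intro i
      have : r i ≤ ∑ j, r j := Finset.single_le_sum (fun j _ => (hr j).le) (Finset.mem_univ i)
      rw [hM]; linarith
    have hmin1 : min 1 (ε / (2 * M)) ≤ 1 := min_le_left _ _
    have hminpos : 0 < min 1 (ε / (2 * M)) := lt_min one_pos (by positivity)
    set t : ℝ := 1 - min 1 (ε / (2 * M)) with ht
    have htpos : 0 ≤ t := by rw [ht]; linarith
    have ht1 : t < 1 := by rw [ht]; linarith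
    refine ⟨fun i => c i + (t : ℂ) * (z i - c i), fun i => ?_, ?_⟩
    · have hzi := hz i
      have habs : ‖(t:ℂ) * (z i - c i)‖ = t * ‖z i - c i‖ := by
        rw [norm_mul, Complex.norm_real, Real.norm_eq_abs, _root_.abs_of_nonneg htpos]
      calc ‖c i + (t:ℂ) * (z i - c i) - c i‖ = t * ‖z i - c i‖ := by
            rw [add_sub_cancel_left, habs]
        _ < r i := by
            rcases eq_or_lt_of_le (norm_nonneg (z i - c i)) with h0 | h0
            · rw [← h0, mul_zero]; exact hr i
            · calc t * ‖z i - c i‖ < 1 * ‖z i - c i‖ :=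
                    mul_lt_mul_of_pos_right ht1 h0
                _ ≤ r i := by rw [one_mul]; exact hzi
    · have hd : ∀ i, dist (z i) (c i + (t:ℂ) * (z i - c i)) ≤ ε / 2 := by
        intro i
        have heq : z i - (c i + (t:ℂ) * (z i - c i)) = (1 - (t:ℂ)) * (z i - c i) := by ring
        rw [Complex.dist_eq, heq, norm_mul]
        have h1t : ‖1 - (t:ℂ)‖ = 1 - t := by
          rw [show (1 : ℂ) - (t:ℂ) = ((1 - t : ℝ) : ℂ) by push_cast; ring]
          rw [Complex.norm_real, Real.norm_eq_abs, _root_.abs_of_nonneg (by linarith)]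
        rw [h1t]
        have h2 : 1 - t ≤ ε / (2 * M) := by rw [ht]; simp only [sub_sub_cancel]; exact min_le_right _ _
        have h3 : ‖z i - c i‖ ≤ M := le_trans (hz i) (hrM i)
        calc (1 - t) * ‖z i - c i‖ ≤ (ε / (2 * M)) * M :=
              mul_le_mul h2 h3 (norm_nonneg _) (by positivity)
          _ = ε / 2 := by field_simp
      calc dist z (fun i => c i + (t:ℂ) * (z i - c i)) ≤ ε / 2 :=
            dist_pi_le_iff (by linarith) |>.2 hd
        _ < ε := by linarith

open Complex Metric Set Real

lemma riemann_approx {α : Type*} [PseudoMetricSpace α] {A : Set α} (hA : IsCompact A)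
    (H : α → ℝ → ℂ)
    (hH : ContinuousOn (fun p : α × ℝ => H p.1 p.2) (A ×ˢ Set.Icc 0 (2 * Real.pi)))
    {ε : ℝ} (hε : 0 < ε) :
    ∃ m : ℕ, 0 < m ∧ ∀ a ∈ A,
      ‖(∫ θ in (0:ℝ)..(2 * Real.pi), H a θ)
        - (((2 * Real.pi / m : ℝ)) : ℂ) * ∑ l ∈ Finset.range m, H a (2 * Real.pi * l / m)‖ ≤ ε := by
  have hT : 0 < 2 * Real.pi := by positivity
  set T := 2 * Real.pi with hTdef
  have hS : IsCompact (A ×ˢ Set.Icc (0:ℝ) T) := hA.prod isCompact_Icc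
  have hUC := hS.uniformContinuousOn_of_continuous hH
  rw [Metric.uniformContinuousOn_iff] at hUC
  obtain ⟨δ, hδ, hδ'⟩ := hUC (ε / (2 * T)) (by positivity)
  obtain ⟨m, hm⟩ := exists_nat_gt (max 1 (T / δ))
  have hm1 : (1:ℝ) < m := lt_of_le_of_lt (le_max_left _ _) hm
  have hm0 : 0 < m := by exact_mod_cast lt_trans one_pos hm1
  have hmR : (0:ℝ) < m := by exact_mod_cast hm0
  have hTm : T / m < δ := by
    have h1 : T / δ < m := lt_of_le_of_lt (le_max_right _ _) hm
    rw [div_lt_iff₀ hmR]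
    calc T = (T / δ) * δ := by field_simp
      _ < m * δ := mul_lt_mul_of_pos_right h1 hδ
      _ = δ * m := mul_comm _ _
  refine ⟨m, hm0, fun a ha => ?_⟩
  set p : ℕ → ℝ := fun l => T * l / m with hp
  have hp0 : p 0 = 0 := by simp [hp]
  have hpm : p m = T := by simp only [hp]; exact mul_div_cancel_right₀ T hmR.ne'
  have hpmono : ∀ l : ℕ, p l ≤ p (l + 1) := by
    intro l
    rw [hp, div_le_div_iff₀ hmR hmR]
    push_cast
    nlinarith [hT, hmR]
  have hpnonneg : ∀ l : ℕ, 0 ≤ p l := by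
    intro l
    rw [hp]
    positivity
  have hple : ∀ l : ℕ, l ≤ m → p l ≤ T := by
    intro l hl
    rw [hp, div_le_iff₀ hmR]
    have : (l:ℝ) ≤ (m:ℝ) := by exact_mod_cast hl
    nlinarith
  have hdiff : ∀ l : ℕ, p (l + 1) - p l = T / m := by
    intro l
    rw [hp]
    push_cast
    field_simp
    ring
  have hcont : ContinuousOn (fun θ => H a θ) (Set.Icc 0 T) := by
    have heq : (fun θ => H a θ) = (fun q : α × ℝ => H q.1 q.2) ∘ (fun θ => (a, θ)) := rfl
    rw [heq]
    exact hH.comp (Continuous.continuousOn (Continuous.prodMk_right a)) (fun θ hθ => ⟨ha, hθ⟩)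
  have hsub : ∀ l : ℕ, l < m → Set.uIcc (p l) (p (l+1)) ⊆ Set.Icc 0 T := by
    intro l hl
    rw [Set.uIcc_of_le (hpmono l)]
    exact Set.Icc_subset_Icc (hpnonneg l) (hple (l+1) hl)
  have hint : ∀ l : ℕ, l < m →
      IntervalIntegrable (fun θ => H a θ) MeasureTheory.volume (p l) (p (l+1)) :=
    fun l hl => (hcont.mono (hsub l hl)).intervalIntegrable
  have hsplit : ∑ l ∈ Finset.range m, ∫ θ in (p l)..(p (l+1)), H a θ
      = ∫ θ in (0:ℝ)..T, H a θ := by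
    rw [← hp0, ← hpm]
    exact intervalIntegral.sum_integral_adjacent_intervals hint
  have hkey : (∫ θ in (0:ℝ)..T, H a θ) - ((T / m : ℝ) : ℂ) * ∑ l ∈ Finset.range m, H a (p l)
      = ∑ l ∈ Finset.range m, ∫ θ in (p l)..(p (l+1)), (H a θ - H a (p l)) := by
    rw [← hsplit, Finset.mul_sum, ← Finset.sum_sub_distrib]
    apply Finset.sum_congr rfl
    intro l hl
    rw [Finset.mem_range] at hl
    rw [intervalIntegral.integral_sub (hint l hl) intervalIntegrable_const,
      intervalIntegral.integral_const, hdiff l]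
    rw [Complex.real_smul]
  have hbound : ∀ l ∈ Finset.range m,
      ‖∫ θ in (p l)..(p (l+1)), (H a θ - H a (p l))‖ ≤ (ε / (2 * T)) * (T / m) := by
    intro l hl
    rw [Finset.mem_range] at hl
    have hC := intervalIntegral.norm_integral_le_of_norm_le_const (C := ε / (2 * T))
      (f := fun θ => H a θ - H a (p l)) (a := p l) (b := p (l+1)) ?_
    · calc ‖∫ θ in (p l)..(p (l+1)), (H a θ - H a (p l))‖
          ≤ (ε / (2*T)) * |p (l+1) - p l| := hC
        _ = (ε / (2*T)) * (T / m) := by rw [hdiff l, _root_.abs_of_pos (div_pos hT hmR)]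
    · intro θ hθ
      rw [Set.uIoc_of_le (hpmono l)] at hθ
      have hθIcc : θ ∈ Set.Icc 0 T :=
        ⟨le_trans (hpnonneg l) hθ.1.le, le_trans hθ.2 (hple (l+1) hl)⟩
      have hplIcc : p l ∈ Set.Icc 0 T := ⟨hpnonneg l, le_trans (hpmono l) (hple (l+1) hl)⟩
      have h1 : dist θ (p l) < δ := by
        rw [Real.dist_eq, _root_.abs_of_nonneg (by linarith [hθ.1.le])]
        have h2 := hθ.2
        have h3 := hdiff l
        linarith
      have hdist : dist ((a, θ) : α × ℝ) ((a, p l) : α × ℝ) < δ := by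
        have : dist ((a, θ) : α × ℝ) ((a, p l) : α × ℝ) = max (dist a a) (dist θ (p l)) :=
          Prod.dist_eq
        rw [this, dist_self]
        exact max_lt hδ h1
      have h4 := hδ' (a, θ) ⟨ha, hθIcc⟩ (a, p l) ⟨ha, hplIcc⟩ hdist
      dsimp only at h4
      rw [dist_eq_norm] at h4
      exact h4.le
  have hrw : (∑ l ∈ Finset.range m, H a (T * l / m)) = ∑ l ∈ Finset.range m, H a (p l) := by
    apply Finset.sum_congr rfl
    intro l _
    rw [hp]
  rw [hrw, hkey]
  calc ‖∑ l ∈ Finset.range m, ∫ θ in (p l)..(p (l+1)), (H a θ - H a (p l))‖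
      ≤ ∑ l ∈ Finset.range m, ‖∫ θ in (p l)..(p (l+1)), (H a θ - H a (p l))‖ :=
        norm_sum_le _ _
    _ ≤ ∑ _l ∈ Finset.range m, (ε / (2 * T)) * (T / m) := Finset.sum_le_sum hbound
    _ = m * ((ε / (2 * T)) * (T / m)) := by
        rw [Finset.sum_const, Finset.card_range, nsmul_eq_mul]
    _ = ε / 2 := by field_simp
    _ ≤ ε := by linarith

open Complex Metric Set
open scoped NNReal ENNReal

lemma oneD_approx (c₀ : ℂ) (ρ R : ℝ) (hR : 0 ≤ R) (hRρ : R < ρ) (h : ℂ → ℂ)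
    (hd : DifferentiableOn ℂ h (Metric.ball c₀ ρ)) {ε : ℝ} (hε : 0 < ε) :
    ∃ q : ℂ → ℂ, Differentiable ℂ q ∧
      ∀ u ∈ Metric.closedBall c₀ R, ‖h u - q u‖ ≤ ε := by
  have hρ0 : 0 < ρ := lt_of_le_of_lt hR hRρ
  set Rmid : ℝ≥0 := ⟨(R + ρ)/2, by positivity⟩ with hRmid
  have hRmid0 : 0 < Rmid := by
    rw [← NNReal.coe_lt_coe]
    show (0:ℝ) < (R + ρ)/2
    linarith
  have hsub : Metric.closedBall c₀ (Rmid : ℝ) ⊆ Metric.ball c₀ ρ := by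
    intro x hx
    rw [Metric.mem_closedBall] at hx
    rw [Metric.mem_ball]
    have : (Rmid : ℝ) = (R + ρ)/2 := rfl
    rw [this] at hx
    linarith
  have hd' : DifferentiableOn ℂ h (Metric.closedBall c₀ (Rmid : ℝ)) := hd.mono hsub
  have hps := hd'.hasFPowerSeriesOnBall hRmid0
  set r' : ℝ≥0 := ⟨(3*R + ρ)/4, by positivity⟩ with hr'
  have hr'lt : (r' : ℝ≥0∞) < (Rmid : ℝ≥0∞) := by
    rw [ENNReal.coe_lt_coe, ← NNReal.coe_lt_coe]
    show (3*R + ρ)/4 < (R + ρ)/2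
    linarith
  have htu := hps.tendstoUniformlyOn' hr'lt
  rw [Metric.tendstoUniformlyOn_iff] at htu
  obtain ⟨n, hn⟩ := (htu ε hε).exists
  set p := cauchyPowerSeries h c₀ (Rmid : ℝ) with hp
  refine ⟨fun u => ∑ k ∈ Finset.range n, (u - c₀) ^ k • p.coeff k, ?_, ?_⟩
  · apply Differentiable.fun_sum
    intro k _
    exact ((differentiable_id.sub_const c₀).pow k).smul_const (p.coeff k)
  · intro u hu
    have hu' : u ∈ Metric.ball c₀ (r' : ℝ) := by
      rw [Metric.mem_closedBall] at hu
      rw [Metric.mem_ball]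
      have : (r' : ℝ) = (3*R + ρ)/4 := rfl
      rw [this]
      linarith
    have := hn u hu'
    rw [dist_eq_norm] at this
    have heq : FormalMultilinearSeries.partialSum p n (u - c₀)
        = ∑ k ∈ Finset.range n, (u - c₀) ^ k • p.coeff k := by
      rw [FormalMultilinearSeries.partialSum]
      exact Finset.sum_congr rfl fun k _ => p.apply_eq_pow_smul_coeff
    rw [heq] at this
    exact this.le

lemma differentiable_consR {n : ℕ} (a : ℂ) :
    Differentiable ℂ (fun w : Fin n → ℂ => (Fin.cons a w : Fin (n+1) → ℂ)) := by
  rw [differentiable_pi]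
  intro i
  induction i using Fin.cases with
  | zero => simp only [Fin.cons_zero]; exact differentiable_const a
  | succ j =>
    simp only [Fin.cons_succ]
    exact (ContinuousLinearMap.proj (R := ℂ) (φ := fun _ : Fin n => ℂ) j).differentiable

lemma differentiable_consL {n : ℕ} (t : Fin n → ℂ) :
    Differentiable ℂ (fun a : ℂ => (Fin.cons a t : Fin (n+1) → ℂ)) := by
  rw [differentiable_pi]
  intro i
  induction i using Fin.cases with
  | zero => simp only [Fin.cons_zero]; exact differentiable_id
  | succ j => simp only [Fin.cons_succ]; exact differentiable_const (t j)

lemma differentiable_tail' {n : ℕ} :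
    Differentiable ℂ (fun z : Fin (n+1) → ℂ => (Fin.tail z : Fin n → ℂ)) := by
  rw [differentiable_pi]
  intro i
  exact (ContinuousLinearMap.proj (R := ℂ) (φ := fun _ : Fin (n+1) => ℂ) i.succ).differentiable

lemma continuous_consR {n : ℕ} :
    Continuous (fun p : ℂ × (Fin n → ℂ) => (Fin.cons p.1 p.2 : Fin (n+1) → ℂ)) := by
  apply continuous_pi
  intro i
  induction i using Fin.cases with
  | zero => simp only [Fin.cons_zero]; exact continuous_fst
  | succ j =>
    simp only [Fin.cons_succ]
    exact (continuous_apply j).comp continuous_snd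

lemma continuous_tail' {n : ℕ} :
    Continuous (fun z : Fin (n+1) → ℂ => (Fin.tail z : Fin n → ℂ)) := by
  apply continuous_pi
  intro i
  exact continuous_apply i.succ

lemma polydisk_approx : ∀ (n : ℕ) (c : Fin n → ℂ) (r : Fin n → ℝ) (Z : Set (Fin n → ℂ)),
    IsOpen Z → pbar c r ⊆ Z → ∀ g : (Fin n → ℂ) → ℂ, DifferentiableOn ℂ g Z →
    ∀ ε : ℝ, 0 < ε → ∃ P : (Fin n → ℂ) → ℂ, Differentiable ℂ P ∧
      ∀ z ∈ pbar c r, ‖g z - P z‖ ≤ ε := by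
  intro n
  induction n with
  | zero =>
    intro c r Z hZo hZ g hg ε hε
    refine ⟨fun _ => g (fun i => i.elim0), differentiable_const _, fun z _ => ?_⟩
    have hzeq : z = (fun i => i.elim0) := funext fun i => i.elim0
    rw [hzeq, sub_self]
    simpa using hε.le
  | succ n IH =>
    intro c r Z hZo hZ g hg ε hε
    by_cases hr : ∀ i, 0 ≤ r i
    swap
    · push_neg at hr
      obtain ⟨i, hi⟩ := hr
      exact ⟨fun _ => 0, differentiable_const _,
        fun z hz => absurd ((norm_nonneg _).trans (hz i)) (not_le.2 hi)⟩
    -- positive radius case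
    obtain ⟨δ, hδ0, hδsub⟩ := (isCompact_pbar c r).exists_thickening_subset_open hZo hZ
    have hplus : ∀ z : Fin (n+1) → ℂ,
        (∀ i, ‖z i - c i‖ ≤ r i + δ/2) → z ∈ Z := by
      intro z hz
      apply hδsub
      rw [Metric.mem_thickening_iff]
      refine ⟨fun i => c i + (z i - c i) * (((r i / (r i + δ/2) : ℝ)) : ℂ), fun i => ?_, ?_⟩
      · have hpos : (0:ℝ) < r i + δ/2 := by have := hr i; linarith
        have hq : (0:ℝ) ≤ r i / (r i + δ/2) := div_nonneg (hr i) hpos.le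
        rw [add_sub_cancel_left, norm_mul, Complex.norm_real, Real.norm_eq_abs, _root_.abs_of_nonneg hq]
        calc ‖z i - c i‖ * (r i / (r i + δ/2))
            ≤ (r i + δ/2) * (r i / (r i + δ/2)) :=
              mul_le_mul_of_nonneg_right (hz i) hq
          _ = r i := by
              have hne0 : r i * 2 + δ ≠ 0 := by have := hr i; positivity
              field_simp
      · rw [dist_pi_lt_iff hδ0]
        intro i
        have hpos : (0:ℝ) < r i + δ/2 := by have := hr i; linarith
        have heq : z i - (c i + (z i - c i) * (((r i / (r i + δ/2) : ℝ)) : ℂ))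
            = (z i - c i) * ((((δ/2) / (r i + δ/2) : ℝ)) : ℂ) := by
          have hco : ((r i / (r i + δ/2) : ℝ) : ℂ) + (((δ/2) / (r i + δ/2) : ℝ) : ℂ) = 1 := by
            rw [← Complex.ofReal_add, ← Complex.ofReal_one]
            congr 1
            have hne0 : r i * 2 + δ ≠ 0 := by have := hr i; positivity
            field_simp
          linear_combination (c i - z i) * hco
        rw [Complex.dist_eq, heq, norm_mul, Complex.norm_real, Real.norm_eq_abs,
          _root_.abs_of_nonneg (by positivity)]
        calc ‖z i - c i‖ * ((δ/2) / (r i + δ/2))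
            ≤ (r i + δ/2) * ((δ/2) / (r i + δ/2)) :=
              mul_le_mul_of_nonneg_right (hz i) (by positivity)
          _ = δ/2 := by
              have hne0 : r i * 2 + δ ≠ 0 := by have := hr i; positivity
              field_simp
          _ < δ := by linarith
    set ρ : ℝ := r 0 + δ/2 with hρdef
    have hρ0 : 0 < ρ := by have := hr 0; rw [hρdef]; linarith
    have hr0ρ : r 0 < ρ := by rw [hρdef]; linarith
    set c' : Fin n → ℂ := fun i => c i.succ with hc'
    set r' : Fin n → ℝ := fun i => r i.succ with hr'
    -- bound M for g on the enlarged polydisk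
    have hDplus_sub : pbar c (fun i => r i + δ/2) ⊆ Z := fun z hz => hplus z hz
    obtain ⟨M0, hM0⟩ := (isCompact_pbar c (fun i => r i + δ/2)).exists_bound_of_continuousOn
      (hg.continuousOn.mono hDplus_sub)
    set M : ℝ := max M0 0 with hM
    have hMnn : 0 ≤ M := le_max_right _ _
    have hMb : ∀ x ∈ pbar c (fun i => r i + δ/2), ‖g x‖ ≤ M := by
      intro x hx
      exact (hM0 x hx).trans (le_max_left _ _)
    -- circle geometry
    have hwc : ∀ θ : ℝ, ‖circleMap (c 0) ρ θ - c 0‖ = ρ := by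
      intro θ
      rw [circleMap_sub_center, norm_circleMap_zero, _root_.abs_of_pos hρ0]
    have hne : ∀ z ∈ pbar c r, ∀ θ : ℝ, δ/2 ≤ ‖circleMap (c 0) ρ θ - z 0‖ := by
      intro z hz θ
      have h1 := hwc θ
      have h2 : ‖circleMap (c 0) ρ θ - c 0‖
          ≤ ‖circleMap (c 0) ρ θ - z 0‖ + ‖z 0 - c 0‖ := by
        have heq : circleMap (c 0) ρ θ - c 0
            = (circleMap (c 0) ρ θ - z 0) + (z 0 - c 0) := by ring
        rw [heq]
        exact norm_add_le _ _
      have h3 := hz 0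
      rw [h1, hρdef] at h2
      linarith
    -- membership of cons points in the enlarged polydisk
    have hconsmem : ∀ w : ℂ, ‖w - c 0‖ ≤ ρ → ∀ t ∈ pbar c' r',
        (Fin.cons w t : Fin (n+1) → ℂ) ∈ pbar c (fun i => r i + δ/2) := by
      intro w hw t ht i
      induction i using Fin.cases with
      | zero =>
        simp only [Fin.cons_zero]
        rw [hρdef] at hw
        exact hw
      | succ j =>
        simp only [Fin.cons_succ]
        have := ht j
        rw [hr'] at this
        rw [hc'] at this
        have hd2 : (0:ℝ) ≤ δ/2 := by linarith
        calc ‖t j - c j.succ‖ ≤ r j.succ := this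
          _ ≤ r j.succ + δ/2 := by linarith
    have htailmem : ∀ z ∈ pbar c r, Fin.tail z ∈ pbar c' r' := fun z hz j => hz j.succ
    -- the discretized Cauchy kernel
    set H : (Fin (n+1) → ℂ) → ℝ → ℂ := fun z θ =>
      circleMap 0 ρ θ * Complex.I *
        ((circleMap (c 0) ρ θ - z 0)⁻¹ * g (Fin.cons (circleMap (c 0) ρ θ) (Fin.tail z)))
      with hH
    -- Cauchy integral formula
    have hcau : ∀ z ∈ pbar c r,
        (∫ θ in (0:ℝ)..(2*Real.pi), H z θ) = (2 * (Real.pi:ℂ) * Complex.I) * g z := by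
      intro z hz
      have hmaps : Set.MapsTo (fun w => (Fin.cons w (Fin.tail z) : Fin (n+1) → ℂ))
          (Metric.closedBall (c 0) ρ) Z := by
        intro w hw
        rw [Metric.mem_closedBall, Complex.dist_eq] at hw
        exact hplus _ (hconsmem w hw (Fin.tail z) (htailmem z hz))
      have hdiff : DifferentiableOn ℂ (fun w => g (Fin.cons w (Fin.tail z)))
          (Metric.closedBall (c 0) ρ) :=
        hg.comp (differentiable_consL (Fin.tail z)).differentiableOn hmaps
      have hz0 : z 0 ∈ Metric.ball (c 0) ρ := by
        rw [Metric.mem_ball, Complex.dist_eq]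
        exact lt_of_le_of_lt (hz 0) hr0ρ
      have hc := Complex.circleIntegral_sub_inv_smul_of_differentiable_on_off_countable
        Set.countable_empty hz0 hdiff.continuousOn
        (fun x hx => (hdiff.mono Metric.ball_subset_closedBall).differentiableAt
          (Metric.isOpen_ball.mem_nhds hx.1))
      rw [Fin.cons_self_tail] at hc
      rw [smul_eq_mul] at hc
      rw [← hc, circleIntegral]
      apply intervalIntegral.integral_congr
      intro θ _
      rw [hH]
      simp only [deriv_circleMap, smul_eq_mul]
      try ring
    -- continuity of H on the compact set
    have hHcont : ContinuousOn (fun p : (Fin (n+1) → ℂ) × ℝ => H p.1 p.2)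
        (pbar c r ×ˢ Set.Icc 0 (2*Real.pi)) := by
      rw [hH]
      apply ContinuousOn.mul
      · exact (((continuous_circleMap 0 ρ).comp continuous_snd).mul
          continuous_const).continuousOn
      · apply ContinuousOn.mul
        · apply ContinuousOn.inv₀
          · exact (((continuous_circleMap (c 0) ρ).comp continuous_snd).sub
              ((continuous_apply 0).comp continuous_fst)).continuousOn
          · rintro ⟨z, θ⟩ ⟨hz, hθ⟩
            intro h0
            have := hne z hz θ
            rw [h0] at this
            simp only [norm_zero] at this
            linarith
        · have hmapc : Continuous (fun p : (Fin (n+1) → ℂ) × ℝ =>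
              (Fin.cons (circleMap (c 0) ρ p.2) (Fin.tail p.1) : Fin (n+1) → ℂ)) := by
            have heq : (fun p : (Fin (n+1) → ℂ) × ℝ =>
                (Fin.cons (circleMap (c 0) ρ p.2) (Fin.tail p.1) : Fin (n+1) → ℂ))
                = (fun q : ℂ × (Fin n → ℂ) => (Fin.cons q.1 q.2 : Fin (n+1) → ℂ))
                  ∘ (fun p => (circleMap (c 0) ρ p.2, Fin.tail p.1)) := rfl
            rw [heq]
            exact continuous_consR.comp
              (((continuous_circleMap _ _).comp continuous_snd).prodMk
                (continuous_tail'.comp continuous_fst))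
          apply ContinuousOn.comp hg.continuousOn hmapc.continuousOn
          rintro ⟨z, θ⟩ ⟨hz, hθ⟩
          exact hplus _ (hconsmem _ (hwc θ).le (Fin.tail z) (htailmem z hz))
    -- Riemann sums
    obtain ⟨m, hm0, hriem⟩ := riemann_approx (isCompact_pbar c r) H hHcont
      (ε := Real.pi * ε) (by positivity)
    have hmR : (0:ℝ) < m := by exact_mod_cast hm0
    -- auxiliary constants
    set κ : ℝ := 2/δ with hκ
    have hκ0 : 0 < κ := by rw [hκ]; positivity
    set ε₂ : ℝ := ε / (4 * ρ * κ + 1) with hε₂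
    have hε₂0 : 0 < ε₂ := by rw [hε₂]; positivity
    set ε₃ : ℝ := ε / (4 * ρ * (M + ε₂) + 1) with hε₃
    have hε₃0 : 0 < ε₃ := by rw [hε₃]; positivity
    -- kernel approximations in the first variable
    have hqall : ∀ l : ℕ, ∃ q : ℂ → ℂ, Differentiable ℂ q ∧
        ∀ u ∈ Metric.closedBall (c 0) (r 0),
          ‖(circleMap (c 0) ρ (2*Real.pi*l/m) - u)⁻¹ - q u‖ ≤ ε₃ := by
      intro l
      apply oneD_approx (c 0) ρ (r 0) (hr 0) hr0ρ _ _ hε₃0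
      apply DifferentiableOn.fun_inv
      · exact ((differentiable_const _).sub differentiable_id).differentiableOn
      · intro u hu
        rw [sub_ne_zero]
        intro hequ
        have h1 := hwc (2*Real.pi*l/m)
        rw [hequ] at h1
        rw [Metric.mem_ball, Complex.dist_eq] at hu
        rw [h1] at hu
        exact lt_irrefl _ hu
    -- slice approximations in the remaining variables
    have hQall : ∀ l : ℕ, ∃ Q : (Fin n → ℂ) → ℂ, Differentiable ℂ Q ∧
        ∀ t ∈ pbar c' r',
          ‖g (Fin.cons (circleMap (c 0) ρ (2*Real.pi*l/m)) t) - Q t‖ ≤ ε₂ := by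
      intro l
      have hcontc : Continuous (fun t : Fin n → ℂ =>
          (Fin.cons (circleMap (c 0) ρ (2*Real.pi*l/m)) t : Fin (n+1) → ℂ)) := by
        have heq : (fun t : Fin n → ℂ =>
            (Fin.cons (circleMap (c 0) ρ (2*Real.pi*l/m)) t : Fin (n+1) → ℂ))
            = (fun q : ℂ × (Fin n → ℂ) => (Fin.cons q.1 q.2 : Fin (n+1) → ℂ))
              ∘ (fun t => (circleMap (c 0) ρ (2*Real.pi*l/m), t)) := rfl
        rw [heq]
        exact continuous_consR.comp (Continuous.prodMk_right _)
      have hZl : IsOpen {t : Fin n → ℂ |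
          (Fin.cons (circleMap (c 0) ρ (2*Real.pi*l/m)) t : Fin (n+1) → ℂ) ∈ Z} :=
        hZo.preimage hcontc
      have hsubl : pbar c' r' ⊆ {t : Fin n → ℂ |
          (Fin.cons (circleMap (c 0) ρ (2*Real.pi*l/m)) t : Fin (n+1) → ℂ) ∈ Z} :=
        fun t ht => hplus _ (hconsmem _ (hwc _).le t ht)
      have hdl : DifferentiableOn ℂ
          (fun t => g (Fin.cons (circleMap (c 0) ρ (2*Real.pi*l/m)) t))
          {t : Fin n → ℂ |
            (Fin.cons (circleMap (c 0) ρ (2*Real.pi*l/m)) t : Fin (n+1) → ℂ) ∈ Z} :=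
        hg.comp (differentiable_consR _).differentiableOn (fun t ht => ht)
      exact IH c' r' _ hZl hsubl _ hdl ε₂ hε₂0
    choose q hqdiff hqbound using hqall
    choose Q hQdiff hQbound using hQall
    -- the approximating entire function
    refine ⟨fun z => (2 * (Real.pi:ℂ) * Complex.I)⁻¹ * (((2 * Real.pi / m : ℝ) : ℂ) *
      ∑ l ∈ Finset.range m, (circleMap 0 ρ (2*Real.pi*l/m) * Complex.I) *
        (q l (z 0) * Q l (Fin.tail z))), ?_, ?_⟩
    · apply Differentiable.const_mul
      apply Differentiable.const_mul
      apply Differentiable.fun_sum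
      intro l _
      exact (((hqdiff l).comp
        ((ContinuousLinearMap.proj (R := ℂ) (φ := fun _ : Fin (n+1) => ℂ) 0).differentiable)).mul
        ((hQdiff l).comp differentiable_tail')).const_mul _
    · intro z hz
      have habs2πI : ‖2 * (Real.pi:ℂ) * Complex.I‖ = 2 * Real.pi := by
        rw [norm_mul, norm_mul, Complex.norm_two, Complex.norm_real, Real.norm_eq_abs, Complex.norm_I,
          _root_.abs_of_pos Real.pi_pos, mul_one]
      have h2πI_ne : (2 * (Real.pi:ℂ) * Complex.I) ≠ 0 := by
        intro h0
        rw [h0, norm_zero] at habs2πI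
        have := Real.pi_pos
        linarith
      -- first half: Riemann sum approximation
      have hgz : g z = (2 * (Real.pi:ℂ) * Complex.I)⁻¹ * ∫ θ in (0:ℝ)..(2*Real.pi), H z θ := by
        rw [hcau z hz, inv_mul_cancel_left₀ h2πI_ne]
      have h1 : ‖g z - (2 * (Real.pi:ℂ) * Complex.I)⁻¹ *
          (((2 * Real.pi / m : ℝ) : ℂ) * ∑ l ∈ Finset.range m, H z (2*Real.pi*l/m))‖ ≤ ε/2 := by
        rw [hgz, ← mul_sub, norm_mul, norm_inv, habs2πI]
        have hb := hriem z hz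
        calc (2 * Real.pi)⁻¹ * ‖(∫ θ in (0:ℝ)..(2*Real.pi), H z θ) -
            ((2 * Real.pi / m : ℝ) : ℂ) * ∑ l ∈ Finset.range m, H z (2*Real.pi*l/m)‖
            ≤ (2 * Real.pi)⁻¹ * (Real.pi * ε) := by
              apply mul_le_mul_of_nonneg_left hb
              positivity
          _ = ε/2 := by
              field_simp
      -- second half: kernel and slice approximation
      have h2 : ‖(2 * (Real.pi:ℂ) * Complex.I)⁻¹ *
          (((2 * Real.pi / m : ℝ) : ℂ) * ∑ l ∈ Finset.range m, H z (2*Real.pi*l/m)) -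
          (2 * (Real.pi:ℂ) * Complex.I)⁻¹ * (((2 * Real.pi / m : ℝ) : ℂ) *
          ∑ l ∈ Finset.range m, (circleMap 0 ρ (2*Real.pi*l/m) * Complex.I) *
            (q l (z 0) * Q l (Fin.tail z)))‖ ≤ ε/2 := by
        have hfact : (2 * (Real.pi:ℂ) * Complex.I)⁻¹ *
            (((2 * Real.pi / m : ℝ) : ℂ) * ∑ l ∈ Finset.range m, H z (2*Real.pi*l/m)) -
            (2 * (Real.pi:ℂ) * Complex.I)⁻¹ * (((2 * Real.pi / m : ℝ) : ℂ) *
            ∑ l ∈ Finset.range m, (circleMap 0 ρ (2*Real.pi*l/m) * Complex.I) *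
              (q l (z 0) * Q l (Fin.tail z)))
            = (2 * (Real.pi:ℂ) * Complex.I)⁻¹ * ((2 * Real.pi / m : ℝ) : ℂ) *
              ∑ l ∈ Finset.range m, (H z (2*Real.pi*l/m) -
                (circleMap 0 ρ (2*Real.pi*l/m) * Complex.I) * (q l (z 0) * Q l (Fin.tail z))) := by
          rw [Finset.sum_sub_distrib]
          ring
        rw [hfact, norm_mul, norm_mul, norm_inv, habs2πI, Complex.norm_real, Real.norm_eq_abs,
          _root_.abs_of_pos (by positivity : (0:ℝ) < 2 * Real.pi / m)]
        have hterm : ∀ l ∈ Finset.range m,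
            ‖H z (2*Real.pi*l/m) -
              (circleMap 0 ρ (2*Real.pi*l/m) * Complex.I) * (q l (z 0) * Q l (Fin.tail z))‖
            ≤ ρ * (κ * ε₂ + ε₃ * (M + ε₂)) := by
          intro l _
          have hsplit : H z (2*Real.pi*l/m) -
              (circleMap 0 ρ (2*Real.pi*l/m) * Complex.I) * (q l (z 0) * Q l (Fin.tail z))
              = (circleMap 0 ρ (2*Real.pi*l/m) * Complex.I) *
                (((circleMap (c 0) ρ (2*Real.pi*l/m) - z 0)⁻¹ *
                  g (Fin.cons (circleMap (c 0) ρ (2*Real.pi*l/m)) (Fin.tail z))) -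
                  q l (z 0) * Q l (Fin.tail z)) := by
            rw [hH]
            ring
          rw [hsplit, norm_mul]
          have hcm : ‖circleMap 0 ρ (2*Real.pi*l/m) * Complex.I‖ = ρ := by
            rw [norm_mul, norm_circleMap_zero, Complex.norm_I, mul_one, _root_.abs_of_pos hρ0]
          rw [hcm]
          apply mul_le_mul_of_nonneg_left _ hρ0.le
          -- the product estimate
          have hdecomp : ((circleMap (c 0) ρ (2*Real.pi*l/m) - z 0)⁻¹ *
              g (Fin.cons (circleMap (c 0) ρ (2*Real.pi*l/m)) (Fin.tail z))) -
              q l (z 0) * Q l (Fin.tail z)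
              = (circleMap (c 0) ρ (2*Real.pi*l/m) - z 0)⁻¹ *
                  (g (Fin.cons (circleMap (c 0) ρ (2*Real.pi*l/m)) (Fin.tail z)) -
                    Q l (Fin.tail z))
                + ((circleMap (c 0) ρ (2*Real.pi*l/m) - z 0)⁻¹ - q l (z 0)) *
                    Q l (Fin.tail z) := by
            ring
          rw [hdecomp]
          have hinv : ‖(circleMap (c 0) ρ (2*Real.pi*l/m) - z 0)⁻¹‖ ≤ κ := by
            rw [norm_inv]
            have hge := hne z hz (2*Real.pi*l/m)
            have h2δ : (0:ℝ) < δ/2 := by linarith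
            calc (‖circleMap (c 0) ρ (2*Real.pi*l/m) - z 0‖)⁻¹ ≤ (δ/2)⁻¹ := by
                  apply inv_anti₀ h2δ hge
              _ = κ := by rw [hκ]; rw [inv_div]
          have hgQ := hQbound l (Fin.tail z) (htailmem z hz)
          have hq' : ‖(circleMap (c 0) ρ (2*Real.pi*l/m) - z 0)⁻¹ - q l (z 0)‖ ≤ ε₃ := by
            apply hqbound l (z 0)
            rw [Metric.mem_closedBall, Complex.dist_eq]
            exact hz 0
          have hQM : ‖Q l (Fin.tail z)‖ ≤ M + ε₂ := by
            have hgM := hMb (Fin.cons (circleMap (c 0) ρ (2*Real.pi*l/m)) (Fin.tail z))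
              (hconsmem _ (hwc _).le (Fin.tail z) (htailmem z hz))
            have heq : Q l (Fin.tail z)
                = g (Fin.cons (circleMap (c 0) ρ (2*Real.pi*l/m)) (Fin.tail z)) -
                  (g (Fin.cons (circleMap (c 0) ρ (2*Real.pi*l/m)) (Fin.tail z)) -
                    Q l (Fin.tail z)) := by ring
            rw [heq]
            calc ‖_‖ ≤ ‖g (Fin.cons (circleMap (c 0) ρ (2*Real.pi*l/m))
                  (Fin.tail z))‖ + ‖(g (Fin.cons (circleMap (c 0) ρ
                  (2*Real.pi*l/m)) (Fin.tail z))) - Q l (Fin.tail z)‖ := by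
                  exact norm_sub_le _ _
              _ ≤ M + ε₂ := add_le_add hgM hgQ
          calc ‖_‖ ≤ ‖(circleMap (c 0) ρ (2*Real.pi*l/m) - z 0)⁻¹ *
                (g (Fin.cons (circleMap (c 0) ρ (2*Real.pi*l/m)) (Fin.tail z)) -
                  Q l (Fin.tail z))‖
              + ‖((circleMap (c 0) ρ (2*Real.pi*l/m) - z 0)⁻¹ - q l (z 0)) *
                  Q l (Fin.tail z)‖ := norm_add_le _ _
            _ ≤ κ * ε₂ + ε₃ * (M + ε₂) := by
                rw [norm_mul, norm_mul]
                apply add_le_add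
                · exact mul_le_mul hinv hgQ (norm_nonneg _) hκ0.le
                · exact mul_le_mul hq' hQM (norm_nonneg _) hε₃0.le
        calc (2 * Real.pi)⁻¹ * (2 * Real.pi / m) *
            ‖∑ l ∈ Finset.range m, (H z (2*Real.pi*l/m) -
              (circleMap 0 ρ (2*Real.pi*l/m) * Complex.I) * (q l (z 0) * Q l (Fin.tail z)))‖
            ≤ (2 * Real.pi)⁻¹ * (2 * Real.pi / m) * (m * (ρ * (κ * ε₂ + ε₃ * (M + ε₂)))) := by
              apply mul_le_mul_of_nonneg_left _ (by positivity)
              calc ‖∑ l ∈ Finset.range m, (H z (2*Real.pi*l/m) -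
                  (circleMap 0 ρ (2*Real.pi*l/m) * Complex.I) * (q l (z 0) * Q l (Fin.tail z)))‖
                  ≤ ∑ l ∈ Finset.range m, ‖(H z (2*Real.pi*l/m) -
                    (circleMap 0 ρ (2*Real.pi*l/m) * Complex.I) *
                    (q l (z 0) * Q l (Fin.tail z)))‖ := norm_sum_le _ _
                _ ≤ ∑ _l ∈ Finset.range m, ρ * (κ * ε₂ + ε₃ * (M + ε₂)) := by
                    apply Finset.sum_le_sum
                    intro l hl
                    exact hterm l hl
                _ = m * (ρ * (κ * ε₂ + ε₃ * (M + ε₂))) := by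
                    rw [Finset.sum_const, Finset.card_range, nsmul_eq_mul]
          _ = ρ * (κ * ε₂ + ε₃ * (M + ε₂)) := by
              field_simp
          _ ≤ ε/4 + ε/4 := by
              rw [mul_add]
              apply add_le_add
              · -- ρ * (κ * ε₂) ≤ ε/4
                have he1 : ρ * (κ * ε₂) = ε * (ρ * κ) / (4 * ρ * κ + 1) := by
                  rw [hε₂]; ring
                rw [he1, div_le_div_iff₀ (by positivity) (by norm_num : (0:ℝ) < 4)]
                nlinarith [hε.le, mul_pos hρ0 hκ0]
              · -- ρ * (ε₃ * (M + ε₂)) ≤ ε/4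
                have he2 : ρ * (ε₃ * (M + ε₂)) = ε * (ρ * (M + ε₂)) / (4 * ρ * (M + ε₂) + 1) := by
                  rw [hε₃]; ring
                rw [he2, div_le_div_iff₀ (by positivity) (by norm_num : (0:ℝ) < 4)]
                nlinarith [hε.le, mul_pos hρ0 (lt_of_lt_of_le hε₂0 (le_add_of_nonneg_left hMnn))]
          _ = ε/2 := by ring
      -- combine
      have hcomb : g z - ((2 * (Real.pi:ℂ) * Complex.I)⁻¹ * (((2 * Real.pi / m : ℝ) : ℂ) *
          ∑ l ∈ Finset.range m, (circleMap 0 ρ (2*Real.pi*l/m) * Complex.I) *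
            (q l (z 0) * Q l (Fin.tail z))))
          = (g z - (2 * (Real.pi:ℂ) * Complex.I)⁻¹ *
            (((2 * Real.pi / m : ℝ) : ℂ) * ∑ l ∈ Finset.range m, H z (2*Real.pi*l/m)))
          + ((2 * (Real.pi:ℂ) * Complex.I)⁻¹ *
            (((2 * Real.pi / m : ℝ) : ℂ) * ∑ l ∈ Finset.range m, H z (2*Real.pi*l/m)) -
            (2 * (Real.pi:ℂ) * Complex.I)⁻¹ * (((2 * Real.pi / m : ℝ) : ℂ) *
            ∑ l ∈ Finset.range m, (circleMap 0 ρ (2*Real.pi*l/m) * Complex.I) *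
              (q l (z 0) * Q l (Fin.tail z)))) := by ring
      rw [hcomb]
      calc ‖_‖ ≤ _ + _ := norm_add_le _ _
        _ ≤ ε/2 + ε/2 := add_le_add h1 h2
        _ = ε := by ring

/-- The open polydisk in `ℂⁿ` with centre `c` and polyradius `r`. -/
def polydisk {n : ℕ} (c : Fin n → ℂ) (r : Fin n → ℝ) : Set (Fin n → ℂ) :=
  {z | ∀ i, ‖z i - c i‖ < r i}

/-- Runge-type approximation for functions holomorphic in the first variable on
`U₀ × K` (`K` compact Hausdorff).  If `f` is continuous and holomorphic in the first variable
on a neighbourhood `W` of `closure V₀ × closure N` (with `V₀ ⋐ U₀` an open polydisk and `N` an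
open set with closure contained in a compact `L'' ⊆ K`), then for every `ε > 0` there is an `F`
continuous on `U₀ × K` and holomorphic in the first variable with
`sup_{closure V₀ × closure N} |f − F| < ε`. -/
theorem stmt_16 {K : Type*} [TopologicalSpace K] [CompactSpace K] [T2Space K]
    (L'' : Set K) (hL'' : IsCompact L'')
    {n : ℕ} (U₀ : Set (Fin n → ℂ)) (hU₀ : IsOpen U₀)
    (c : Fin n → ℂ) (r : Fin n → ℝ) (hr : ∀ i, 0 < r i)
    (hV₀ : closure (polydisk c r) ⊆ U₀)
    (N : Set K) (hNopen : IsOpen N) (hNL : closure N ⊆ L'')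
    (W : Set ((Fin n → ℂ) × K)) (hWopen : IsOpen W)
    (hWsub : W ⊆ U₀ ×ˢ (Set.univ : Set K))
    (hWnbhd : (closure (polydisk c r)) ×ˢ (closure N) ⊆ W)
    (f : (Fin n → ℂ) × K → ℂ)
    (hfcont : ContinuousOn f W)
    (hfhol : ∀ η : K, DifferentiableOn ℂ (fun z => f (z, η)) {z | (z, η) ∈ W})
    (ε : ℝ) (hε : 0 < ε) :
    ∃ F : (Fin n → ℂ) × K → ℂ,
      ContinuousOn F (U₀ ×ˢ (Set.univ : Set K)) ∧
      (∀ η : K, DifferentiableOn ℂ (fun z => F (z, η)) U₀) ∧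
      ∀ q ∈ (closure (polydisk c r)) ×ˢ (closure N), ‖f q - F q‖ < ε := by
  have hcl : closure (polydisk c r) = pbar c r := closure_polydisk' c r hr
  have hWn' : ∀ z ∈ pbar c r, ∀ η ∈ closure N, (z, η) ∈ W := by
    intro z hz η hη
    apply hWnbhd
    exact Set.mk_mem_prod (hcl ▸ hz) hη
  have hNcl : IsCompact (closure N) := hL''.of_isClosed_subset isClosed_closure hNL
  -- the tube construction around each η₀ in closure N
  have hO : ∀ η₀ : closure N, ∃ v : Set K, IsOpen v ∧ (η₀ : K) ∈ v ∧
      ∀ z ∈ pbar c r, ∀ η ∈ v, ((z, η) ∈ W ∧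
        ‖f (z, η) - f (z, (η₀ : K))‖ < ε/4) := by
    rintro ⟨η₀, hη₀⟩
    have hA'open : IsOpen {p : (Fin n → ℂ) × K | (p.1, η₀) ∈ W} :=
      hWopen.preimage (continuous_fst.prodMk continuous_const)
    have hGcont : ContinuousOn (fun p : (Fin n → ℂ) × K => f p - f (p.1, η₀))
        (W ∩ {p : (Fin n → ℂ) × K | (p.1, η₀) ∈ W}) := by
      apply ContinuousOn.sub
      · exact hfcont.mono Set.inter_subset_left
      · exact hfcont.comp ((continuous_fst.prodMk continuous_const).continuousOn)
          (fun p hp => hp.2)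
    have hSopen : IsOpen ((W ∩ {p : (Fin n → ℂ) × K | (p.1, η₀) ∈ W}) ∩
        (fun p : (Fin n → ℂ) × K => f p - f (p.1, η₀)) ⁻¹' Metric.ball 0 (ε/4)) :=
      hGcont.isOpen_inter_preimage (hWopen.inter hA'open) Metric.isOpen_ball
    have hSsub : pbar c r ×ˢ ({η₀} : Set K) ⊆
        ((W ∩ {p : (Fin n → ℂ) × K | (p.1, η₀) ∈ W}) ∩
        (fun p : (Fin n → ℂ) × K => f p - f (p.1, η₀)) ⁻¹' Metric.ball 0 (ε/4)) := by
      rintro ⟨z, η⟩ ⟨hz, hη⟩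
      rw [Set.mem_singleton_iff] at hη
      subst hη
      refine ⟨⟨hWn' z hz η hη₀, hWn' z hz η hη₀⟩, ?_⟩
      show f (z, η) - f ((z, η).1, η) ∈ Metric.ball (0:ℂ) (ε/4)
      have h0 : f (z, η) - f ((z, η).1, η) = 0 := sub_self _
      rw [h0]
      exact Metric.mem_ball_self (by positivity)
    obtain ⟨u, v, huo, hvo, hpu, hηv, huv⟩ := generalized_tube_lemma (isCompact_pbar c r)
      isCompact_singleton hSopen hSsub
    refine ⟨v, hvo, hηv rfl, ?_⟩
    intro z hz η hη
    have hmem := huv (Set.mk_mem_prod (hpu hz) hη)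
    refine ⟨hmem.1.1, ?_⟩
    have := hmem.2
    rw [Set.mem_preimage, Metric.mem_ball, dist_zero_right] at this
    exact this
  choose O hOopen hOmem hOprop using hO
  -- finite subcover
  have hcover : closure N ⊆ ⋃ i : closure N, O i := by
    intro η hη
    exact Set.mem_iUnion.2 ⟨⟨η, hη⟩, hOmem ⟨η, hη⟩⟩
  obtain ⟨t, ht⟩ := hNcl.elim_finite_subcover O hOopen hcover
  have hcover' : closure N ⊆ ⋃ j : {x // x ∈ t}, O j.1 := by
    intro η hη
    obtain ⟨i, hi, hηi⟩ := Set.mem_iUnion₂.1 (ht hη)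
    exact Set.mem_iUnion.2 ⟨⟨i, hi⟩, hηi⟩
  -- partition of unity
  obtain ⟨φ, hφsub⟩ := PartitionOfUnity.exists_isSubordinate
    (isClosed_closure (s := N)) (fun j : {x // x ∈ t} => O j.1)
    (fun j => hOopen j.1) hcover'
  -- entire approximations of the slices
  have hPall : ∀ j : {x // x ∈ t}, ∃ P : (Fin n → ℂ) → ℂ, Differentiable ℂ P ∧
      ∀ z ∈ pbar c r, ‖f (z, ((j.1 : closure N) : K)) - P z‖ ≤ ε/4 := by
    intro j
    have hZo : IsOpen {z : Fin n → ℂ | (z, ((j.1 : closure N) : K)) ∈ W} :=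
      hWopen.preimage (continuous_id.prodMk continuous_const)
    have hZsub : pbar c r ⊆ {z : Fin n → ℂ | (z, ((j.1 : closure N) : K)) ∈ W} :=
      fun z hz => hWn' z hz _ (j.1 : closure N).2
    exact polydisk_approx n c r _ hZo hZsub _ (hfhol ((j.1 : closure N) : K))
      (ε/4) (by positivity)
  choose P hPdiff hPbound using hPall
  -- the global approximant
  refine ⟨fun p => ∑ j : {x // x ∈ t}, ((φ j p.2 : ℝ) : ℂ) * P j p.1, ?_, ?_, ?_⟩
  · apply Continuous.continuousOn
    apply continuous_finset_sum
    intro j _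
    exact (Complex.continuous_ofReal.comp ((φ j).continuous.comp continuous_snd)).mul
      ((hPdiff j).continuous.comp continuous_fst)
  · intro η
    apply Differentiable.differentiableOn
    apply Differentiable.fun_sum
    intro j _
    show Differentiable ℂ fun y : Fin n → ℂ => ((φ j η : ℝ) : ℂ) * P j y
    exact ((hPdiff j).const_mul _)
  · rintro ⟨z, η⟩ ⟨hzq, hη⟩
    have hz : z ∈ pbar c r := hcl ▸ hzq
    have hs : ∑ j : {x // x ∈ t}, φ j η = 1 := by
      rw [← finsum_eq_sum_of_fintype]
      exact φ.sum_eq_one hη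
    have hrepr : f (z, η) - ∑ j : {x // x ∈ t}, ((φ j η : ℝ) : ℂ) * P j z
        = ∑ j : {x // x ∈ t}, ((φ j η : ℝ) : ℂ) * (f (z, η) - P j z) := by
      have h1 : ∑ j : {x // x ∈ t}, ((φ j η : ℝ) : ℂ) * (f (z, η) - P j z)
          = (∑ j : {x // x ∈ t}, ((φ j η : ℝ) : ℂ)) * f (z, η)
            - ∑ j : {x // x ∈ t}, ((φ j η : ℝ) : ℂ) * P j z := by
        rw [Finset.sum_mul, ← Finset.sum_sub_distrib]
        apply Finset.sum_congr rfl
        intro j _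
        ring
      have h2 : (∑ j : {x // x ∈ t}, ((φ j η : ℝ) : ℂ)) = 1 := by
        rw [← Complex.ofReal_sum, hs, Complex.ofReal_one]
      rw [h1, h2, one_mul]
    rw [hrepr]
    have hterm : ∀ j : {x // x ∈ t}, j ∈ Finset.univ →
        ‖((φ j η : ℝ) : ℂ) * (f (z, η) - P j z)‖ ≤ φ j η * (ε/2) := by
      intro j _
      rw [norm_mul, Complex.norm_real, Real.norm_eq_abs, _root_.abs_of_nonneg (φ.nonneg j η)]
      by_cases hjz : φ j η = 0
      · rw [hjz, zero_mul, zero_mul]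
      · apply mul_le_mul_of_nonneg_left _ (φ.nonneg j η)
        have hηsup : η ∈ O j.1 := hφsub j (subset_closure (Function.mem_support.2 hjz))
        obtain ⟨hWmem, habs⟩ := hOprop j.1 z hz η hηsup
        have hP := hPbound j z hz
        calc ‖f (z, η) - P j z‖
            ≤ ‖f (z, η) - f (z, ((j.1 : closure N) : K))‖
              + ‖f (z, ((j.1 : closure N) : K)) - P j z‖ :=
              norm_sub_le_norm_sub_add_norm_sub _ _ _
          _ ≤ ε/2 := by linarith
    calc ‖∑ j : {x // x ∈ t}, ((φ j η : ℝ) : ℂ) * (f (z, η) - P j z)‖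
        ≤ ∑ j : {x // x ∈ t}, φ j η * (ε/2) := by
          refine le_trans (norm_sum_le _ _) ?_
          apply Finset.sum_le_sum
          intro j hj
          exact hterm j hj
      _ = ε/2 := by rw [← Finset.sum_mul, hs, one_mul]
      _ < ε := by linarith
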